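/- Let N be an acyclic CP-net with induced flip-based preference ≻, and let o₁ = R·x₁·o₁′, o₂ = R·x₂·o₂′ share the ancestor assignment R at variable X, with x₁ ≻ x₂ given R. Let N₂ be the sub-CP-net on the remaining variables obtained by restricting all CPTs to R·x₂, with induced preference ≻₂. If o₁′ ≻₂ o₂′, then o₁ ≻ o₂. -/

import Mathlib

theorem stmt_14 {n : ℕ} (D : Fin n → Type) [∀ i, Finite (D i)]
    (Pa : Fin n → Set (Fin n)) (hPa : ∀ i j, j ∈ Pa i → j < i)
    (r : ∀ i : Fin n, (∀ j, D j) → D i → D i → Prop)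
    (hdep : ∀ i o o', (∀ j ∈ Pa i, o j = o' j) → ∀ a b, (r i o a b ↔ r i o' a b))
    (hirr : ∀ i o a, ¬ r i o a a)
    (htrans : ∀ i o a b c, r i o a b → r i o b c → r i o a c)
    (htotal : ∀ i o (a b : D i), a ≠ b → r i o a b ∨ r i o b a)
    (flip : (∀ j, D j) → (∀ j, D j) → Prop)
    (hflip : ∀ a b, flip a b ↔ ∃ i, (∀ j, j ≠ i → a j = b j) ∧ r i b (a i) (b i))
    (pref : (∀ j, D j) → (∀ j, D j) → Prop)
    (hpref : ∀ a b, pref a b ↔ Relation.TransGen flip a b)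
(flipA : Fin n → (∀ j, D j) → (∀ j, D j) → Prop)
    (hflipA : ∀ k a b, flipA k a b ↔
      ∃ i, k < i ∧ (∀ j, j ≠ i → a j = b j) ∧ r i b (a i) (b i))
    (o₁ o₂ : ∀ j, D j) (k : Fin n)
    (hR : ∀ j, j < k → o₁ j = o₂ j)
    (hx : r k o₂ (o₁ k) (o₂ k))
    (hsub : Relation.TransGen (flipA k) (Function.update o₁ k (o₂ k)) o₂) :
    pref o₁ o₂ := by
  set o₁' := Function.update o₁ k (o₂ k) with ho₁'
  have h1 : flip o₁ o₁' := by
    rw [hflip]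
    refine ⟨k, fun j hj => (Function.update_of_ne hj _ _).symm, ?_⟩
    have hupk : o₁' k = o₂ k := Function.update_self _ _ _
    rw [hupk]
    have hag : ∀ j ∈ Pa k, o₁' j = o₂ j := by
      intro j hj
      have hjk : j < k := hPa k j hj
      rw [ho₁', Function.update_of_ne (Fin.ne_of_lt hjk)]
      exact hR j hjk
    exact (hdep k o₁' o₂ hag (o₁ k) (o₂ k)).2 hx
  have h2 : Relation.TransGen flip o₁' o₂ := by
    refine Relation.TransGen.mono ?_ _ _ hsub
    intro a b hab
    rw [hflipA] at hab
    obtain ⟨i, _, hagree, hr⟩ := hab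
    exact (hflip a b).2 ⟨i, hagree, hr⟩
  rw [hpref]
  exact Relation.TransGen.head h1 h2
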